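/- Let Θ = {θ_1 < … < θ_d} be an ordered finite support and let Π_C^Θ denote the Cramér (linear-interpolation) categorical projection onto Θ. For every probability measure η on ℝ with finite second moment and every c ∈ ℝ, projecting the translate (τ_c)_#η onto the shifted support Θ_c := {θ + c : θ ∈ Θ} yields the translate by c of the projection of η onto Θ: Π_C^{Θ_c}((τ_c)_#η) = (τ_c)_#(Π_C^Θ η). -/

import Mathlib

open MeasureTheory
open scoped ENNReal NNReal

/-- Hat (linear-interpolation with edge clipping) function of the uniform grid
`θ_k = θ0 + k·Δ`, `k = 0, …, d−1`, evaluated at `x`. -/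
noncomputable def hatFn (θ0 Δ : ℝ) (d k : ℕ) (x : ℝ) : ℝ :=
  if k = 0 then min 1 (max 0 ((θ0 + Δ - x) / Δ))
  else if k = d - 1 then min 1 (max 0 ((x - (θ0 + ((d : ℝ) - 2) * Δ)) / Δ))
  else max 0 (1 - |x - (θ0 + (k : ℝ) * Δ)| / Δ)

/-- The Cramér (linear-interpolation) categorical projection of a measure `η`
onto the uniform grid `θ_k = θ0 + k·Δ`, `k = 0, …, d−1`. -/
noncomputable def catProj (θ0 Δ : ℝ) (d : ℕ) (η : Measure ℝ) : Measure ℝ :=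
  ∑ k ∈ Finset.range d,
    ENNReal.ofReal (∫ x, hatFn θ0 Δ d k x ∂η) • Measure.dirac (θ0 + (k : ℝ) * Δ)

lemma hatFn_shift (θ0 Δ : ℝ) (d k : ℕ) (c x : ℝ) :
    hatFn (θ0 + c) Δ d k (x + c) = hatFn θ0 Δ d k x := by
  unfold hatFn
  have h1 : θ0 + c + Δ - (x + c) = θ0 + Δ - x := by ring
  have h2 : x + c - (θ0 + c + ((d : ℝ) - 2) * Δ) = x - (θ0 + ((d : ℝ) - 2) * Δ) := by ring
  have h3 : x + c - (θ0 + c + (k : ℝ) * Δ) = x - (θ0 + (k : ℝ) * Δ) := by ring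
  rw [h1, h2, h3]

lemma hatFn_continuous (θ0 Δ : ℝ) (d k : ℕ) : Continuous (hatFn θ0 Δ d k) := by
  unfold hatFn
  split_ifs <;> fun_prop

/-- projection shift-equivariance. Projecting the translate
`(τ_c)_# η` onto the `c`-shifted support equals the translate by `c` of the
projection of `η` onto the original support. -/
theorem catProj_shift_equivariant
    (θ0 Δ : ℝ) (hΔ : 0 < Δ) (d : ℕ) (hd : 2 ≤ d)
    (η : Measure ℝ) [IsProbabilityMeasure η] (hmom : MemLp id 2 η)
    (c : ℝ) :
    catProj (θ0 + c) Δ d (Measure.map (· + c) η)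
      = Measure.map (· + c) (catProj θ0 Δ d η) := by
  have hmeas : Measurable (fun x : ℝ => x + c) := measurable_add_const c
  unfold catProj
  simp_rw [← Measure.mapₗ_apply_of_measurable hmeas, map_sum, LinearMap.map_smul]
  refine Finset.sum_congr rfl fun k _ => ?_
  simp only [Measure.mapₗ_apply_of_measurable hmeas, Measure.map_dirac' hmeas]
  congr 2
  · rw [integral_map hmeas.aemeasurable
      ((hatFn_continuous (θ0 + c) Δ d k).aestronglyMeasurable)]
    exact integral_congr_ae (Filter.Eventually.of_forall fun x => hatFn_shift θ0 Δ d k c x)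
  · ring
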